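/- Norm estimate for the correlation solution: if each f_{|X|} satisfies ‖f_{|X|}‖₁ ≤ c for a constant c ≥ 1, then ‖(𝔄_t(f))_n‖₁ ≤ Σ_{m=1}^{n} S(n,m) c^m Σ_{k=1}^{m} k^{m−1} ≤ n! e^{3n} c^n, where S(n,m) are Stirling numbers of the second kind. In particular (𝔄_t(f))_n is trace class for all t. -/

import Mathlib

open Finset

/-- The Stirling number of the second kind `S(n,k)`. -/
noncomputable def stirling (n k : ℕ) : ℕ :=
  Fintype.card {P : Finpartition (Finset.range n) // P.parts.card = k}


private lemma aux_card_mul_factorial_le {α : Type*} [DecidableEq α] (s : Finset α) (k : ℕ) :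
    Fintype.card {Q : Finpartition s // Q.parts.card = k} * k.factorial ≤ k ^ s.card := by
  classical
  set Φ : {Q : Finpartition s // Q.parts.card = k} × Equiv.Perm (Fin k) → (s → Fin k) :=
    fun p x => p.2 ((p.1.1.parts.equivFinOfCardEq p.1.2) ⟨p.1.1.part x.1, p.1.1.part_mem.2 x.2⟩)
    with hΦ
  have key : Function.Injective Φ := by
    rintro ⟨⟨Q, hQ⟩, σ⟩ ⟨⟨Q', hQ'⟩, σ'⟩ hab
    have hfun : ∀ x : s,
        σ ((Q.parts.equivFinOfCardEq hQ) ⟨Q.part x.1, Q.part_mem.2 x.2⟩) =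
        σ' ((Q'.parts.equivFinOfCardEq hQ') ⟨Q'.part x.1, Q'.part_mem.2 x.2⟩) :=
      fun x => congrFun hab x
    have hpart : ∀ x y : s, Q.part x.1 = Q.part y.1 ↔ Q'.part x.1 = Q'.part y.1 := by
      intro x y
      constructor
      · intro h
        have h1 : σ ((Q.parts.equivFinOfCardEq hQ) ⟨Q.part x.1, Q.part_mem.2 x.2⟩) =
            σ ((Q.parts.equivFinOfCardEq hQ) ⟨Q.part y.1, Q.part_mem.2 y.2⟩) := by
          congr 2
          exact Subtype.ext h
        rw [hfun x, hfun y] at h1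
        have := (Q'.parts.equivFinOfCardEq hQ').injective (σ'.injective h1)
        exact congrArg Subtype.val this
      · intro h
        have h1 : σ' ((Q'.parts.equivFinOfCardEq hQ') ⟨Q'.part x.1, Q'.part_mem.2 x.2⟩) =
            σ' ((Q'.parts.equivFinOfCardEq hQ') ⟨Q'.part y.1, Q'.part_mem.2 y.2⟩) := by
          congr 2
          exact Subtype.ext h
        rw [← hfun x, ← hfun y] at h1
        have := (Q.parts.equivFinOfCardEq hQ).injective (σ.injective h1)
        exact congrArg Subtype.val this
    have hpart' : ∀ y : s, Q.part y.1 = Q'.part y.1 := by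
      intro y
      ext z
      constructor
      · intro hz
        have hzs : z ∈ s := Q.le (Q.part_mem.2 y.2) hz
        have h2 : Q.part z = Q.part y.1 := Q.part_eq_of_mem (Q.part_mem.2 y.2) hz
        have h3 : Q'.part z = Q'.part y.1 := (hpart ⟨z, hzs⟩ y).1 h2
        exact h3 ▸ Q'.mem_part hzs
      · intro hz
        have hzs : z ∈ s := Q'.le (Q'.part_mem.2 y.2) hz
        have h2 : Q'.part z = Q'.part y.1 := Q'.part_eq_of_mem (Q'.part_mem.2 y.2) hz
        have h3 : Q.part z = Q.part y.1 := (hpart ⟨z, hzs⟩ y).2 h2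
        exact h3 ▸ Q.mem_part hzs
    have hQQ : Q = Q' := by
      ext b
      constructor
      · intro hb
        obtain ⟨y, hy⟩ := Q.nonempty_of_mem_parts hb
        have hys : y ∈ s := Q.le hb hy
        have : b = Q.part y := (Q.part_eq_of_mem hb hy).symm
        rw [this, hpart' ⟨y, hys⟩]
        exact Q'.part_mem.2 hys
      · intro hb
        obtain ⟨y, hy⟩ := Q'.nonempty_of_mem_parts hb
        have hys : y ∈ s := Q'.le hb hy
        have : b = Q'.part y := (Q'.part_eq_of_mem hb hy).symm
        rw [this, ← hpart' ⟨y, hys⟩]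
        exact Q.part_mem.2 hys
    subst hQQ
    have hσ : σ = σ' := by
      ext j
      obtain ⟨y, hy⟩ := Q.nonempty_of_mem_parts ((Q.parts.equivFinOfCardEq hQ).symm j).2
      have hys : y ∈ s := Q.le ((Q.parts.equivFinOfCardEq hQ).symm j).2 hy
      have hpy : (⟨Q.part y, Q.part_mem.2 hys⟩ : {x // x ∈ Q.parts}) =
          (Q.parts.equivFinOfCardEq hQ).symm j :=
        Subtype.ext (Q.part_eq_of_mem ((Q.parts.equivFinOfCardEq hQ).symm j).2 hy)
      have hj : (Q.parts.equivFinOfCardEq hQ) ⟨Q.part y, Q.part_mem.2 hys⟩ = j := by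
        rw [hpy]; exact (Q.parts.equivFinOfCardEq hQ).apply_symm_apply j
      have := hfun ⟨y, hys⟩
      simp only at this
      rw [hj] at this
      rw [this, ← hj]
    subst hσ
    rfl
  have hcard := Fintype.card_le_of_injective Φ key
  rwa [Fintype.card_prod, Fintype.card_perm, Fintype.card_fin, Fintype.card_fun,
    Fintype.card_fin, Fintype.card_coe] at hcard

private lemma aux_sum_group {ι : Type*} [Fintype ι] {M : Type*} [AddCommMonoid M]
    (g : ι → ℕ) (N : ℕ) (hb : ∀ i, g i ∈ Finset.Icc 1 N) (H : ℕ → M) :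
    ∑ i : ι, H (g i) = ∑ m ∈ Finset.Icc 1 N, (Fintype.card {i // g i = m}) • H m := by
  classical
  rw [← Finset.sum_fiberwise_of_maps_to' (fun i _ => hb i) H]
  refine Finset.sum_congr rfl fun m _ => ?_
  rw [Finset.sum_const, Fintype.card_subtype]

private lemma aux_sum_factorial_le {α : Type*} [DecidableEq α] (s : Finset α) (hs : s.Nonempty) :
    ∑ Q : Finpartition s, (Q.parts.card - 1).factorial ≤
      ∑ k ∈ Finset.Icc 1 s.card, k ^ (s.card - 1) := by
  classical
  have hb : ∀ Q : Finpartition s, Q.parts.card ∈ Finset.Icc 1 s.card := by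
    intro Q
    rw [Finset.mem_Icc]
    refine ⟨Finset.card_pos.2 (Q.parts_nonempty ?_), Q.card_parts_le_card⟩
    simpa [Finset.bot_eq_empty] using hs.ne_empty
  rw [aux_sum_group (fun Q : Finpartition s => Q.parts.card) s.card hb
    (fun k => (k - 1).factorial)]
  refine Finset.sum_le_sum fun k hk => ?_
  obtain ⟨hk1, hk2⟩ := Finset.mem_Icc.1 hk
  rw [smul_eq_mul]
  refine Nat.le_of_mul_le_mul_right ?_ hk1
  have h1 : Fintype.card {Q : Finpartition s // Q.parts.card = k} * (k - 1).factorial * k =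
      Fintype.card {Q : Finpartition s // Q.parts.card = k} * k.factorial := by
    rw [mul_assoc, mul_comm ((k - 1).factorial) k, Nat.mul_factorial_pred (by omega)]
  rw [h1]
  have h2 : k ^ (s.card - 1) * k = k ^ s.card := by
    conv_rhs => rw [← Nat.sub_add_cancel (Finset.card_pos.2 hs)]
    rw [pow_succ]
  rw [h2]
  exact aux_card_mul_factorial_le s k

private lemma aux_card_le_stirling {α : Type*} [DecidableEq α] (Y : Finset α) (m : ℕ) :
    Fintype.card {P : Finpartition Y // P.parts.card = m} ≤ stirling Y.card m := by
  classical
  set n := Y.card with hn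
  let e : ↥Y ≃ ↥(Finset.range n) :=
    Y.equivFin.trans (Finset.equivFinOfCardEq (Finset.card_range n)).symm
  set g : α → ℕ := fun a => if h : a ∈ Y then ((e ⟨a, h⟩ : ↥(Finset.range n)) : ℕ) else 0 with hg
  have hgY : ∀ a (h : a ∈ Y), g a = ((e ⟨a, h⟩ : ↥(Finset.range n)) : ℕ) := by
    intro a h; simp [hg, h]
  have hg_inj : Set.InjOn g Y := by
    intro a ha b hb h
    rw [hgY a ha, hgY b hb] at h
    exact Subtype.mk_eq_mk.mp (e.injective (Subtype.ext h))
  have himg : Y.image g = Finset.range n := by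
    ext b
    simp only [Finset.mem_image]
    constructor
    · rintro ⟨a, ha, rfl⟩
      rw [hgY a ha]
      exact (e ⟨a, ha⟩).2
    · intro hb
      refine ⟨(e.symm ⟨b, hb⟩ : ↥Y), (e.symm ⟨b, hb⟩).2, ?_⟩
      rw [hgY _ (e.symm ⟨b, hb⟩).2]
      simp
  have himgpart : ∀ p ⊆ Y, ∀ q ⊆ Y, p.image g = q.image g → p = q := by
    intro p hp q hq h
    ext x
    constructor
    · intro hx
      have : g x ∈ q.image g := h ▸ Finset.mem_image_of_mem g hx
      obtain ⟨y, hy, hyx⟩ := Finset.mem_image.1 this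
      exact hg_inj (hq hy) (hp hx) hyx ▸ hy
    · intro hx
      have : g x ∈ p.image g := h.symm ▸ Finset.mem_image_of_mem g hx
      obtain ⟨y, hy, hyx⟩ := Finset.mem_image.1 this
      exact hg_inj (hp hy) (hq hx) hyx ▸ hy
  let F : Finpartition Y → Finpartition (Finset.range n) := fun P =>
    { parts := P.parts.image (fun p => p.image g)
      supIndep := by
        rw [Finset.supIndep_iff_pairwiseDisjoint]
        rintro u hu v hv huv
        simp only [Finset.coe_image, Set.mem_image, Finset.mem_coe] at hu hv
        obtain ⟨p, hp, rfl⟩ := hu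
        obtain ⟨q, hq, rfl⟩ := hv
        have hpq : p ≠ q := fun h => huv (by rw [h])
        have hdisj : Disjoint p q :=
          (Finset.supIndep_iff_pairwiseDisjoint.1 P.supIndep) hp hq hpq
        show Disjoint (p.image g) (q.image g)
        rw [Finset.disjoint_left]
        rintro x hx hx'
        obtain ⟨a, ha, rfl⟩ := Finset.mem_image.1 hx
        obtain ⟨b, hb, hba⟩ := Finset.mem_image.1 hx'
        have haY : a ∈ Y := P.le hp ha
        have hbY : b ∈ Y := P.le hq hb
        have : b = a := hg_inj hbY haY hba
        subst this
        exact Finset.disjoint_left.1 hdisj ha hb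
      sup_parts := by
        rw [Finset.sup_image, Function.id_comp]
        have : P.parts.sup (fun p : Finset α => p.image g) =
            (P.parts.sup id).image g := by
          ext x
          simp only [Finset.mem_sup, Finset.mem_image]
          constructor
          · rintro ⟨p, hp, a, ha, rfl⟩
            exact ⟨a, ⟨p, hp, ha⟩, rfl⟩
          · rintro ⟨a, ⟨p, hp, ha⟩, rfl⟩
            exact ⟨p, hp, a, ha, rfl⟩
        rw [this, P.sup_parts]
        exact himg
      bot_notMem := by
        simp only [Finset.bot_eq_empty, Finset.mem_image]
        rintro ⟨p, hp, hpe⟩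
        rw [Finset.image_eq_empty] at hpe
        exact P.bot_notMem (by rw [Finset.bot_eq_empty, ← hpe]; exact hp) }
  have hFparts : ∀ P : Finpartition Y, (F P).parts = P.parts.image (fun p => p.image g) :=
    fun P => rfl
  have hinjOnParts : ∀ P : Finpartition Y,
      Set.InjOn (fun p : Finset α => p.image g) P.parts := by
    intro P p hp q hq h
    exact himgpart p (P.le hp) q (P.le hq) h
  have hFcard : ∀ P : Finpartition Y, (F P).parts.card = P.parts.card := by
    intro P
    rw [hFparts, Finset.card_image_of_injOn (hinjOnParts P)]
  have hFinj : Function.Injective F := by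
    intro P P' h
    have hparts : P.parts.image (fun p => p.image g) = P'.parts.image (fun p => p.image g) := by
      rw [← hFparts, ← hFparts, h]
    ext p
    constructor
    · intro hp
      have : p.image g ∈ P'.parts.image (fun p => p.image g) :=
        hparts ▸ Finset.mem_image_of_mem _ hp
      obtain ⟨q, hq, hqp⟩ := Finset.mem_image.1 this
      exact himgpart q (P'.le hq) p (P.le hp) hqp ▸ hq
    · intro hp
      have : p.image g ∈ P.parts.image (fun p => p.image g) :=
        hparts.symm ▸ Finset.mem_image_of_mem _ hp
      obtain ⟨q, hq, hqp⟩ := Finset.mem_image.1 this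
      exact himgpart q (P.le hq) p (P'.le hp) hqp ▸ hq
  have : Function.Injective
      (fun P : {P : Finpartition Y // P.parts.card = m} =>
        (⟨F P.1, by rw [hFcard]; exact P.2⟩ :
          {P : Finpartition (Finset.range n) // P.parts.card = m})) := by
    rintro ⟨P, hP⟩ ⟨P', hP'⟩ h
    simpa using Subtype.ext (hFinj (congrArg Subtype.val h))
  exact Fintype.card_le_of_injective _ this

private lemma aux_pow_le_factorial_mul_exp (m : ℕ) :
    (m : ℝ) ^ m ≤ (m.factorial : ℝ) * Real.exp m := by
  have h := Real.sum_le_exp_of_nonneg (x := (m : ℝ)) (Nat.cast_nonneg m) (m + 1)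
  have hterm : (m : ℝ) ^ m / (m.factorial : ℝ) ≤
      ∑ i ∈ Finset.range (m + 1), (m : ℝ) ^ i / (i.factorial : ℝ) :=
    Finset.single_le_sum (f := fun i => (m : ℝ) ^ i / (i.factorial : ℝ))
      (fun i _ => by positivity) (Finset.self_mem_range_succ m)
  have h2 := hterm.trans h
  have hfm : (0 : ℝ) < (m.factorial : ℝ) := by exact_mod_cast m.factorial_pos
  rw [div_le_iff₀ hfm] at h2
  nlinarith [h2]

/-- The nonlinear cumulant dynamics (see the von Neumann hierarchy solution):
`(𝔄_t(f))(Y) = Σ_{P} Σ_{P'} (−1)^{|P'|−1}(|P'|−1)! Π_k G(θ(Z_k))(−t)(Π_{X∈Z_k} f X)`. -/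
noncomputable def clusterCumulantMap {α A : Type*} [DecidableEq α] [NormedCommRing A]
    (G : Finset α → ℝ → (A →+ A)) (t : ℝ) (f : Finset α → A) (Y : Finset α) : A :=
  ∑ P : Finpartition Y, ∑ Q : Finpartition P.parts,
    ((-1 : A) ^ (Q.parts.card - 1) * ((Q.parts.card - 1).factorial : A)) *
      ∏ Z ∈ Q.parts, G (Z.sup id) t (∏ X ∈ Z, f X)

/-- Norm estimate for the correlation solution: if the evolution groups are
isometries and every `f(X)` has norm at most `c` with `c ≥ 1`, then for `|Y| = n`
one has `‖(𝔄_t f)(Y)‖ ≤ Σ_{m=1}^{n} S(n,m) c^m Σ_{k=1}^{m} k^{m−1} ≤ n! e^{3n} c^n`. -/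
theorem clusterCumulantMap_norm_estimate
    {α A : Type*} [DecidableEq α] [NormedCommRing A] [NormOneClass A]
    (G : Finset α → ℝ → (A →+ A))
    (hGiso : ∀ (X : Finset α) (t : ℝ) (a : A), ‖G X t a‖ = ‖a‖)
    (c : ℝ) (hc : 1 ≤ c)
    (f : Finset α → A) (hf : ∀ X : Finset α, ‖f X‖ ≤ c)
    (t : ℝ) (Y : Finset α) (hY : Y.Nonempty) :
    ‖clusterCumulantMap G t f Y‖ ≤
        ∑ m ∈ Finset.Icc 1 Y.card, (stirling Y.card m : ℝ) * c ^ m *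
          ∑ k ∈ Finset.Icc 1 m, (k : ℝ) ^ (m - 1) ∧
      (∑ m ∈ Finset.Icc 1 Y.card, (stirling Y.card m : ℝ) * c ^ m *
          ∑ k ∈ Finset.Icc 1 m, (k : ℝ) ^ (m - 1)) ≤
        (Y.card.factorial : ℝ) * Real.exp 1 ^ (3 * Y.card) * c ^ Y.card := by
  classical
  have hc0 : (0 : ℝ) ≤ c := zero_le_one.trans hc
  have hYbot : Y ≠ (⊥ : Finset α) := by simpa [Finset.bot_eq_empty] using hY.ne_empty
  set n := Y.card with hn
  have hn1 : 1 ≤ n := Finset.card_pos.2 hY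
  constructor
  · -- first inequality
    have hterm : ∀ P : Finpartition Y, ∀ Q : Finpartition P.parts,
        ‖((-1 : A) ^ (Q.parts.card - 1) * ((Q.parts.card - 1).factorial : A)) *
            ∏ Z ∈ Q.parts, G (Z.sup id) t (∏ X ∈ Z, f X)‖ ≤
          ((Q.parts.card - 1).factorial : ℝ) * c ^ P.parts.card := by
      intro P Q
      have h1 : ‖(-1 : A) ^ (Q.parts.card - 1)‖ ≤ 1 := by
        rcases Nat.even_or_odd (Q.parts.card - 1) with he | ho
        · rw [he.neg_one_pow, norm_one]
        · rw [ho.neg_one_pow, norm_neg, norm_one]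
      have h2 : ‖(((Q.parts.card - 1).factorial : ℕ) : A)‖ ≤
          ((Q.parts.card - 1).factorial : ℝ) := by
        simpa using Nat.norm_cast_le (α := A) ((Q.parts.card - 1).factorial)
      have h3 : ‖∏ Z ∈ Q.parts, G (Z.sup id) t (∏ X ∈ Z, f X)‖ ≤ c ^ P.parts.card := by
        calc ‖∏ Z ∈ Q.parts, G (Z.sup id) t (∏ X ∈ Z, f X)‖
            ≤ ∏ Z ∈ Q.parts, ‖G (Z.sup id) t (∏ X ∈ Z, f X)‖ := Finset.norm_prod_le _ _
          _ = ∏ Z ∈ Q.parts, ‖∏ X ∈ Z, f X‖ :=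
              Finset.prod_congr rfl fun Z _ => hGiso _ _ _
          _ ≤ ∏ Z ∈ Q.parts, c ^ Z.card := by
              refine Finset.prod_le_prod (fun Z _ => norm_nonneg _) fun Z _ => ?_
              calc ‖∏ X ∈ Z, f X‖ ≤ ∏ X ∈ Z, ‖f X‖ := Finset.norm_prod_le _ _
                _ ≤ ∏ X ∈ Z, c :=
                    Finset.prod_le_prod (fun _ _ => norm_nonneg _) (fun X _ => hf X)
                _ = c ^ Z.card := Finset.prod_const c
          _ = c ^ (∑ Z ∈ Q.parts, Z.card) := Finset.prod_pow_eq_pow_sum _ _ _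
          _ = c ^ P.parts.card := by rw [Q.sum_card_parts]
      calc ‖((-1 : A) ^ (Q.parts.card - 1) * ((Q.parts.card - 1).factorial : A)) *
              ∏ Z ∈ Q.parts, G (Z.sup id) t (∏ X ∈ Z, f X)‖
          ≤ ‖(-1 : A) ^ (Q.parts.card - 1) * ((Q.parts.card - 1).factorial : A)‖ *
              ‖∏ Z ∈ Q.parts, G (Z.sup id) t (∏ X ∈ Z, f X)‖ := norm_mul_le _ _
        _ ≤ (1 * ((Q.parts.card - 1).factorial : ℝ)) * c ^ P.parts.card := by
            refine mul_le_mul ?_ h3 (norm_nonneg _) (by positivity)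
            exact (norm_mul_le _ _).trans
              (mul_le_mul h1 h2 (norm_nonneg _) zero_le_one)
        _ = ((Q.parts.card - 1).factorial : ℝ) * c ^ P.parts.card := by rw [one_mul]
    have step1 : ‖clusterCumulantMap G t f Y‖ ≤
        ∑ P : Finpartition Y,
          (c ^ P.parts.card * ∑ k ∈ Finset.Icc 1 P.parts.card,
            (k : ℝ) ^ (P.parts.card - 1)) := by
      rw [clusterCumulantMap]
      refine (norm_sum_le _ _).trans (Finset.sum_le_sum fun P _ => ?_)
      refine (norm_sum_le _ _).trans ?_
      calc ∑ Q : Finpartition P.parts,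
            ‖((-1 : A) ^ (Q.parts.card - 1) * ((Q.parts.card - 1).factorial : A)) *
              ∏ Z ∈ Q.parts, G (Z.sup id) t (∏ X ∈ Z, f X)‖
          ≤ ∑ Q : Finpartition P.parts,
              ((Q.parts.card - 1).factorial : ℝ) * c ^ P.parts.card :=
            Finset.sum_le_sum fun Q _ => hterm P Q
        _ = (∑ Q : Finpartition P.parts, ((Q.parts.card - 1).factorial : ℝ)) *
              c ^ P.parts.card := by rw [← Finset.sum_mul]
        _ ≤ (∑ k ∈ Finset.Icc 1 P.parts.card, (k : ℝ) ^ (P.parts.card - 1)) *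
              c ^ P.parts.card := by
            refine mul_le_mul_of_nonneg_right ?_ (by positivity)
            have hnat := aux_sum_factorial_le P.parts (P.parts_nonempty hYbot)
            calc (∑ Q : Finpartition P.parts, ((Q.parts.card - 1).factorial : ℝ))
                = ((∑ Q : Finpartition P.parts, (Q.parts.card - 1).factorial : ℕ) : ℝ) := by
                  push_cast; rfl
              _ ≤ ((∑ k ∈ Finset.Icc 1 P.parts.card, k ^ (P.parts.card - 1) : ℕ) : ℝ) := by
                  exact_mod_cast hnat
              _ = ∑ k ∈ Finset.Icc 1 P.parts.card, (k : ℝ) ^ (P.parts.card - 1) := by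
                  push_cast; rfl
        _ = c ^ P.parts.card * ∑ k ∈ Finset.Icc 1 P.parts.card,
              (k : ℝ) ^ (P.parts.card - 1) := mul_comm _ _
    have hb : ∀ P : Finpartition Y, P.parts.card ∈ Finset.Icc 1 n := by
      intro P
      rw [Finset.mem_Icc]
      exact ⟨Finset.card_pos.2 (P.parts_nonempty hYbot), P.card_parts_le_card⟩
    have step2 := aux_sum_group (fun P : Finpartition Y => P.parts.card) n hb
      (fun m => c ^ m * ∑ k ∈ Finset.Icc 1 m, (k : ℝ) ^ (m - 1))
    refine step1.trans ?_
    rw [step2]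
    refine Finset.sum_le_sum fun m _ => ?_
    rw [nsmul_eq_mul, mul_assoc]
    refine mul_le_mul_of_nonneg_right ?_ ?_
    · exact_mod_cast aux_card_le_stirling Y m
    · have : (0 : ℝ) ≤ ∑ k ∈ Finset.Icc 1 m, (k : ℝ) ^ (m - 1) :=
        Finset.sum_nonneg fun k _ => by positivity
      positivity
  · -- second inequality
    have hexp : ∀ k : ℕ, Real.exp k = Real.exp 1 ^ k := by
      intro k
      rw [← Real.exp_nat_mul, mul_one]
    have hnpow : (n : ℝ) ^ n ≤ (n.factorial : ℝ) * Real.exp n :=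
      aux_pow_le_factorial_mul_exp n
    have hterm2 : ∀ m ∈ Finset.Icc 1 n,
        (stirling n m : ℝ) * c ^ m * (∑ k ∈ Finset.Icc 1 m, (k : ℝ) ^ (m - 1)) ≤
          (n.factorial : ℝ) * Real.exp n ^ 2 * c ^ n := by
      intro m hm
      obtain ⟨hm1, hm2⟩ := Finset.mem_Icc.1 hm
      have hfm : (0 : ℝ) < (m.factorial : ℝ) := by exact_mod_cast m.factorial_pos
      have h1 : (stirling n m : ℝ) ≤ (m : ℝ) ^ n / (m.factorial : ℝ) := by
        rw [le_div_iff₀ hfm]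
        have := aux_card_mul_factorial_le (Finset.range n) m
        rw [Finset.card_range] at this
        exact_mod_cast this
      have h2 : (∑ k ∈ Finset.Icc 1 m, (k : ℝ) ^ (m - 1)) ≤ (m : ℝ) ^ m := by
        calc (∑ k ∈ Finset.Icc 1 m, (k : ℝ) ^ (m - 1))
            ≤ ∑ _k ∈ Finset.Icc 1 m, (m : ℝ) ^ (m - 1) := by
              refine Finset.sum_le_sum fun k hk => ?_
              have hkm : (k : ℝ) ≤ (m : ℝ) := by
                exact_mod_cast (Finset.mem_Icc.1 hk).2
              exact pow_le_pow_left₀ (by positivity) hkm _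
          _ = (m : ℝ) * (m : ℝ) ^ (m - 1) := by
              rw [Finset.sum_const, Nat.card_Icc, Nat.add_sub_cancel, nsmul_eq_mul]
          _ = (m : ℝ) ^ m := by
              rw [← pow_succ', Nat.sub_add_cancel hm1]
      have h3 : c ^ m ≤ c ^ n := pow_le_pow_right₀ hc hm2
      have hmn : (m : ℝ) ^ n ≤ (n : ℝ) ^ n := by
        refine pow_le_pow_left₀ (by positivity) ?_ _
        exact_mod_cast hm2
      calc (stirling n m : ℝ) * c ^ m * (∑ k ∈ Finset.Icc 1 m, (k : ℝ) ^ (m - 1))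
          ≤ ((m : ℝ) ^ n / (m.factorial : ℝ)) * c ^ n * (m : ℝ) ^ m := by
            refine mul_le_mul (mul_le_mul h1 h3 (by positivity) (by positivity)) h2
              (Finset.sum_nonneg fun k _ => by positivity) (by positivity)
        _ = ((m : ℝ) ^ m / (m.factorial : ℝ)) * ((m : ℝ) ^ n * c ^ n) := by ring
        _ ≤ Real.exp m * ((n : ℝ) ^ n * c ^ n) := by
            refine mul_le_mul ?_ (mul_le_mul_of_nonneg_right hmn (by positivity))
              (by positivity) (Real.exp_pos _).le
            rw [div_le_iff₀ hfm]
            calc (m : ℝ) ^ m ≤ (m.factorial : ℝ) * Real.exp m :=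
                  aux_pow_le_factorial_mul_exp m
              _ = Real.exp m * (m.factorial : ℝ) := mul_comm _ _
        _ ≤ Real.exp n * (((n.factorial : ℝ) * Real.exp n) * c ^ n) := by
            refine mul_le_mul (Real.exp_le_exp.2 (by exact_mod_cast hm2))
              (mul_le_mul_of_nonneg_right hnpow (by positivity))
              (by positivity) (Real.exp_pos _).le
        _ = (n.factorial : ℝ) * Real.exp n ^ 2 * c ^ n := by ring
    calc (∑ m ∈ Finset.Icc 1 n, (stirling n m : ℝ) * c ^ m *
            ∑ k ∈ Finset.Icc 1 m, (k : ℝ) ^ (m - 1))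
        ≤ ∑ _m ∈ Finset.Icc 1 n, (n.factorial : ℝ) * Real.exp n ^ 2 * c ^ n :=
          Finset.sum_le_sum hterm2
      _ = (n : ℝ) * ((n.factorial : ℝ) * Real.exp n ^ 2 * c ^ n) := by
          rw [Finset.sum_const, Nat.card_Icc, Nat.add_sub_cancel, nsmul_eq_mul]
      _ ≤ Real.exp n * ((n.factorial : ℝ) * Real.exp n ^ 2 * c ^ n) := by
          refine mul_le_mul_of_nonneg_right ?_ (by positivity)
          have := Real.add_one_le_exp (n : ℝ)
          linarith
      _ = (n.factorial : ℝ) * Real.exp n ^ 3 * c ^ n := by ring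
      _ = (n.factorial : ℝ) * Real.exp 1 ^ (3 * n) * c ^ n := by
          rw [hexp n, ← pow_mul, mul_comm n 3]
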